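/- Let k ≥ 0 and let φ : ℝ³ → ℂ³ be such that y ↦ Γ^k(x−y)φ(y) is σ-integrable on ∂D = ∂B₁ ∪ ∂B₂. Then for every x ∈ ∂B₁, ν₁(x) × ∫_{∂D} Γ^k(x−y)φ(y) dσ(y) = −ν₂(−x) × ∫_{∂D} Γ^k(−x−y)φ(−y) dσ(y); that is, with x̃ = −x and φ̃(ỹ) := φ(−ỹ), ν₁(x) × A_D^k[φ](x) = −ν₂(x̃) × A_D^k[φ̃](x̃). -/

import Mathlib

open MeasureTheory

/-- Coercion `ℝ³ ↪ ℂ³` (componentwise). -/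
noncomputable def toC3 (x : EuclideanSpace ℝ (Fin 3)) : EuclideanSpace ℂ (Fin 3) :=
  (WithLp.equiv 2 (Fin 3 → ℂ)).symm fun i => (x i : ℂ)

/-- Three-dimensional cross product over `ℂ`. -/
noncomputable def crossC (a b : EuclideanSpace ℂ (Fin 3)) : EuclideanSpace ℂ (Fin 3) :=
  (WithLp.equiv 2 (Fin 3 → ℂ)).symm
    ![a 1 * b 2 - a 2 * b 1, a 2 * b 0 - a 0 * b 2, a 0 * b 1 - a 1 * b 0]

/-- The fundamental outgoing solution `Γ^k(z) = -e^{ik|z|}/(4π|z|)`. -/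
noncomputable def helmholtzFundamental (k : ℝ) (z : EuclideanSpace ℝ (Fin 3)) : ℂ :=
  -(Complex.exp (Complex.I * k * ‖z‖) / (4 * Real.pi * ‖z‖))

/-- Center of the first ball: `c₁ = (-r - ε/2, 0, 0)`. -/
noncomputable def ctr1 (r ε : ℝ) : EuclideanSpace ℝ (Fin 3) :=
  (WithLp.equiv 2 (Fin 3 → ℝ)).symm ![-r - ε / 2, 0, 0]

/-- Center of the second ball: `c₂ = (r + ε/2, 0, 0)`. -/
noncomputable def ctr2 (r ε : ℝ) : EuclideanSpace ℝ (Fin 3) :=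
  (WithLp.equiv 2 (Fin 3 → ℝ)).symm ![r + ε / 2, 0, 0]

/-- Outward unit normal on `∂B₁`: `ν₁(x) = (x - c₁)/r`. -/
noncomputable def nu1 (r ε : ℝ) (x : EuclideanSpace ℝ (Fin 3)) : EuclideanSpace ℝ (Fin 3) :=
  r⁻¹ • (x - ctr1 r ε)

/-- Outward unit normal on `∂B₂`: `ν₂(x) = (x - c₂)/r`. -/
noncomputable def nu2 (r ε : ℝ) (x : EuclideanSpace ℝ (Fin 3)) : EuclideanSpace ℝ (Fin 3) :=
  r⁻¹ • (x - ctr2 r ε)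

/-- For `x ∈ ∂B₁`, with `x̃ = -x` and `φ̃(ỹ) := φ(-ỹ)`, the single layer potential
satisfies `ν₁(x) × A_D^k[φ](x) = -ν₂(x̃) × A_D^k[φ̃](x̃)`. -/
theorem stmt_5 (r ε : ℝ) (hr : 0 < r) (hε : 0 < ε) (k : ℝ) (hk : 0 ≤ k)
    (φ : EuclideanSpace ℝ (Fin 3) → EuclideanSpace ℂ (Fin 3))
    (x : EuclideanSpace ℝ (Fin 3)) (hx : x ∈ Metric.sphere (ctr1 r ε) r)
    (hφ : IntegrableOn (fun y => helmholtzFundamental k (x - y) • φ y)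
      (Metric.sphere (ctr1 r ε) r ∪ Metric.sphere (ctr2 r ε) r) μH[2]) :
    crossC (toC3 (nu1 r ε x))
        (∫ y in Metric.sphere (ctr1 r ε) r ∪ Metric.sphere (ctr2 r ε) r,
          helmholtzFundamental k (x - y) • φ y ∂μH[2])
      = -crossC (toC3 (nu2 r ε (-x)))
          (∫ y in Metric.sphere (ctr1 r ε) r ∪ Metric.sphere (ctr2 r ε) r,
            helmholtzFundamental k (-x - y) • φ (-y) ∂μH[2]) := by
  set S := Metric.sphere (ctr1 r ε) r ∪ Metric.sphere (ctr2 r ε) r with hS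
  have hc : ctr2 r ε = -ctr1 r ε := by
    ext i
    fin_cases i <;>
      simp [ctr1, ctr2, WithLp.equiv_symm_apply, PiLp.toLp_apply, PiLp.neg_apply] <;> ring
  -- the two integrals coincide (change of variables y ↦ -y)
  have hI : (∫ y in S, helmholtzFundamental k (-x - y) • φ (-y) ∂μH[2])
      = ∫ y in S, helmholtzFundamental k (x - y) • φ y ∂μH[2] := by
    let e : EuclideanSpace ℝ (Fin 3) ≃ᵢ EuclideanSpace ℝ (Fin 3) :=
      (LinearIsometryEquiv.neg ℝ (E := EuclideanSpace ℝ (Fin 3))).toIsometryEquiv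
    have he : ∀ y, e y = -y := fun y => rfl
    have hmap : Measure.map e μH[2] = μH[2] := e.map_hausdorffMeasure 2
    have hpre : e ⁻¹' S = S := by
      have h1 : ∀ c : EuclideanSpace ℝ (Fin 3),
          e ⁻¹' Metric.sphere c r = Metric.sphere (-c) r := by
        intro c; ext y
        simp only [Set.mem_preimage, Metric.mem_sphere, dist_eq_norm, he]
        rw [show -y - c = -(y - -c) by module, norm_neg]
      simp only [hS, Set.preimage_union, h1, hc, neg_neg, Set.union_comm]
    have heven : ∀ z, helmholtzFundamental k (-z) = helmholtzFundamental k z := by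
      intro z; simp [helmholtzFundamental]
    calc (∫ y in S, helmholtzFundamental k (-x - y) • φ (-y) ∂μH[2])
        = ∫ y in S, helmholtzFundamental k (-x - y) • φ (-y) ∂(Measure.map e μH[2]) := by
          rw [hmap]
      _ = ∫ u in e ⁻¹' S, helmholtzFundamental k (-x - e u) • φ (-(e u)) ∂μH[2] := by
          exact e.toHomeomorph.measurableEmbedding.setIntegral_map _ _
      _ = ∫ u in S, helmholtzFundamental k (x - u) • φ u ∂μH[2] := by
          rw [hpre]
          refine setIntegral_congr_fun
            ((Metric.isClosed_sphere.union Metric.isClosed_sphere).measurableSet)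
            (fun u _ => ?_)
          rw [he, show -x - -u = -(x - u) by module, heven, neg_neg]
  have hnu : nu2 r ε (-x) = -(nu1 r ε x) := by
    simp only [nu1, nu2, hc, sub_neg_eq_add]
    module
  have htoC3 : ∀ v : EuclideanSpace ℝ (Fin 3), toC3 (-v) = -(toC3 v) := by
    intro v; ext i; simp [toC3, WithLp.equiv_symm_apply, PiLp.toLp_apply, PiLp.neg_apply]
  have hcross : ∀ a b : EuclideanSpace ℂ (Fin 3), crossC (-a) b = -(crossC a b) := by
    intro a b; ext i
    fin_cases i <;>
      simp [crossC, WithLp.equiv_symm_apply, PiLp.toLp_apply, PiLp.neg_apply] <;> ring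
  rw [hI, hnu, htoC3, hcross, neg_neg]
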